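/- Let G be a group and H a subgroup such that [H : H ∩ xHx⁻¹] is finite for every x ∈ G (a Hecke pair), and let σ : G → ℂ be a group homomorphism with |σ(g)| = 1 for all g ∈ G such that σ(H) is finite. Set K = H ∩ ker σ, so [H : K] is finite and all indices [K : K ∩ xKx⁻¹] are finite. Let H_σ(G, H) be the set of functions f : G → ℂ with f(hxk) = σ(h)f(x)σ(k) for all h, k ∈ H, x ∈ G, supported on finitely many double cosets HxH, and let H(G, H) be the set of bi-H-invariant functions G → ℂ supported on finitely many double cosets; equip both with the convolution (f ⋆ g)(x) = Σ_{r ∈ R} f(r) g(r⁻¹x), R any set of representatives of the left cosets G/H (the sum is finite and independent of the choice of R), and with the involutions f*(x) = Δ_K(x⁻¹)·conj(f(x⁻¹)) on H_σ(G, H) and g*(x) = Δ_H(x⁻¹)·conj(g(x⁻¹)) on H(G, H), where Δ_A(y) = [A : A ∩ yAy⁻¹]/[A : A ∩ y⁻¹Ay] for a subgroup A. Then the map Φ defined by Φ(f)(x) = conj(σ(x))·f(x) is a bijection from H_σ(G, H) onto H(G, H) satisfying Φ(f ⋆ g) = Φ(f) ⋆ Φ(g) and Φ(f*) = Φ(f)*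 . -/

import Mathlib

/-- The conjugate subgroup `y A y⁻¹`. -/
def conjSub {G : Type*} [Group G] (A : Subgroup G) (y : G) : Subgroup G :=
  Subgroup.map (MulAut.conj y).toMonoidHom A

/-- `Δ_A(y) = [A : A ∩ y A y⁻¹] / [A : A ∩ y⁻¹ A y]`, as a complex number. -/
noncomputable def modularRatio {G : Type*} [Group G] (A : Subgroup G) (y : G) : ℂ :=
  (((A ⊓ conjSub A y).subgroupOf A).index : ℂ) /
    (((A ⊓ conjSub A y⁻¹).subgroupOf A).index : ℂ)

lemma conjSub_relindex {G : Type*} [Group G] (A B : Subgroup G) (y : G) :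
    (conjSub B y).relIndex (conjSub A y) = B.relIndex A := by
  have h := Subgroup.relIndex_comap (H := conjSub B y) ((MulAut.conj y).toMonoidHom) A
  unfold conjSub at h ⊢
  rw [Subgroup.comap_map_eq_self_of_injective (MulAut.conj y).injective] at h
  exact h.symm

lemma conjSub_conjSub {G : Type*} [Group G] (A : Subgroup G) (y z : G) :
    conjSub (conjSub A y) z = conjSub A (z * y) := by
  ext w
  simp only [conjSub, Subgroup.mem_map, MulEquiv.coe_toMonoidHom, MulAut.conj_apply]
  constructor
  · rintro ⟨v, ⟨u, hu, rfl⟩, rfl⟩; exact ⟨u, hu, by group⟩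
  · rintro ⟨u, hu, rfl⟩; exact ⟨y * u * y⁻¹, ⟨u, hu, rfl⟩, by group⟩

lemma conjSub_one {G : Type*} [Group G] (A : Subgroup G) : conjSub A 1 = A := by
  ext w; simp [conjSub]

lemma conjSub_mono {G : Type*} [Group G] {A B : Subgroup G} (h : A ≤ B) (y : G) :
    conjSub A y ≤ conjSub B y := Subgroup.map_mono h

lemma modularRatio_eq {G : Type*} [Group G] (A : Subgroup G) (y : G) :
    modularRatio A y = ((conjSub A y).relIndex A : ℂ) / ((conjSub A y⁻¹).relIndex A : ℂ) := by
  show (((A ⊓ conjSub A y).relIndex A : ℂ)) / (((A ⊓ conjSub A y⁻¹).relIndex A : ℂ)) = _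
  rw [Subgroup.inf_relIndex_left, Subgroup.inf_relIndex_left]

lemma relindex_cocycle {G : Type*} [Group G] (A B D : Subgroup G) (hA : D ≤ A) (hB : D ≤ B) :
    B.relIndex A * D.relIndex B = A.relIndex B * D.relIndex A := by
  have h1 := Subgroup.relIndex_mul_relIndex D (A ⊓ B) A (le_inf hA hB) inf_le_left
  have h2 := Subgroup.relIndex_mul_relIndex D (A ⊓ B) B (le_inf hA hB) inf_le_right
  rw [← h1, ← h2, Subgroup.inf_relIndex_left, Subgroup.inf_relIndex_right]
  ring

/-- Schlichting's identity: the modular ratio of a finite-index subgroup agrees with that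
of the ambient (commensurated) subgroup. -/
lemma delta_eq {G : Type*} [Group G] (H K : Subgroup G) (hKH : K ≤ H)
    (he : K.relIndex H ≠ 0)
    (hHf : ∀ x : G, (conjSub H x).relIndex H ≠ 0)
    (hKf : ∀ x : G, (conjSub K x).relIndex K ≠ 0)
    (y : G) : modularRatio K y = modularRatio H y := by
  set A' := conjSub H y with hA'
  set B' := conjSub K y with hB'
  set D := K ⊓ B' with hD
  have hDK : D ≤ K := inf_le_left
  have hDB' : D ≤ B' := inf_le_right
  have hDH : D ≤ H := le_trans hDK hKH
  have hB'A' : B' ≤ A' := conjSub_mono hKH y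
  have hDA' : D ≤ A' := le_trans hDB' hB'A'
  have f1 : A'.relIndex H * D.relIndex A' = H.relIndex A' * D.relIndex H :=
    relindex_cocycle H A' D hDH hDA'
  have f3 : D.relIndex K * K.relIndex H = D.relIndex H :=
    Subgroup.relIndex_mul_relIndex D K H hDK hKH
  have f4 : D.relIndex B' * B'.relIndex A' = D.relIndex A' :=
    Subgroup.relIndex_mul_relIndex D B' A' hDB' hB'A'
  have hBA : B'.relIndex A' = K.relIndex H := conjSub_relindex H K y
  have hr : D.relIndex K = B'.relIndex K := Subgroup.inf_relIndex_left K B'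
  have hs : D.relIndex B' = K.relIndex B' := Subgroup.inf_relIndex_right K B'
  have hH2 : H.relIndex A' = (conjSub H y⁻¹).relIndex H := by
    have h := conjSub_relindex H (conjSub H y⁻¹) y
    rwa [conjSub_conjSub, mul_inv_cancel, conjSub_one] at h
  have hK2 : K.relIndex B' = (conjSub K y⁻¹).relIndex K := by
    have h := conjSub_relindex K (conjSub K y⁻¹) y
    rwa [conjSub_conjSub, mul_inv_cancel, conjSub_one] at h
  have hb : H.relIndex A' ≠ 0 := by rw [hH2]; exact hHf y⁻¹
  have hd : K.relIndex B' ≠ 0 := by rw [hK2]; exact hKf y⁻¹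
  have q : D.relIndex A' = K.relIndex B' * K.relIndex H := by rw [← f4, hs, hBA]
  have p : D.relIndex H = B'.relIndex K * K.relIndex H := by rw [← f3, hr]
  have e1 : A'.relIndex H * K.relIndex B' * K.relIndex H
      = H.relIndex A' * B'.relIndex K * K.relIndex H := by
    rw [mul_assoc, ← q, mul_assoc, ← p]; exact f1
  have key : A'.relIndex H * K.relIndex B' = H.relIndex A' * B'.relIndex K :=
    Nat.eq_of_mul_eq_mul_right (Nat.pos_of_ne_zero he) e1
  rw [modularRatio_eq, modularRatio_eq, ← hA', ← hB', ← hK2, ← hH2,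
    div_eq_div_iff (Nat.cast_ne_zero.mpr hd) (Nat.cast_ne_zero.mpr hb)]
  have final : B'.relIndex K * H.relIndex A' = A'.relIndex H * K.relIndex B' := by
    rw [mul_comm]; exact key.symm
  exact_mod_cast final

/-- Let `(G, H)` be a Hecke pair and `σ : G → ℂ` a unimodular character
with `σ(H)` finite, `K = H ∩ ker σ`.  Then `[H : K]` is finite, all indices
`[K : K ∩ x K x⁻¹]` are finite, and `Φ(f)(x) = conj(σ x) · f x` is a bijection from the
generalised Hecke algebra `H_σ(G, H)` onto the Hecke algebra `H(G, H)` intertwining the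
convolutions (sums over coset representatives) and the involutions
`f*(x) = Δ_K(x⁻¹) conj (f (x⁻¹))`, resp. `g*(x) = Δ_H(x⁻¹) conj (g (x⁻¹))`. -/
theorem stmt_17 {G : Type*} [Group G] (H : Subgroup G)
    (hHecke : ∀ x : G, ((H ⊓ conjSub H x).subgroupOf H).index ≠ 0)
    (σ : G →* ℂ) (hσu : ∀ g : G, ‖σ g‖ = 1)
    (hσf : (σ '' (H : Set G)).Finite)
    (K : Subgroup G) (hK : K = H ⊓ σ.ker)
    (Hσ Hone : Set (G → ℂ))
    (hHσ : Hσ = {f | (∀ (h k : H) (x : G), f ((h : G) * x * (k : G)) = σ h * f x * σ k) ∧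
      ∃ F : Finset G, ∀ y : G, f y ≠ 0 → ∃ x ∈ F, ∃ h k : H, y = (h : G) * x * (k : G)})
    (hHone : Hone = {f | (∀ (h k : H) (x : G), f ((h : G) * x * (k : G)) = f x) ∧
      ∃ F : Finset G, ∀ y : G, f y ≠ 0 → ∃ x ∈ F, ∃ h k : H, y = (h : G) * x * (k : G)})
    (Φ : (G → ℂ) → (G → ℂ)) (hΦ : ∀ (f : G → ℂ) (x : G), Φ f x = star (σ x) * f x) :
    (K.subgroupOf H).index ≠ 0 ∧
    (∀ x : G, ((K ⊓ conjSub K x).subgroupOf K).index ≠ 0) ∧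
    Set.BijOn Φ Hσ Hone ∧
    (∀ f ∈ Hσ, ∀ g ∈ Hσ, ∀ R : Set G, (∀ y : G, ∃! r : G, r ∈ R ∧ r⁻¹ * y ∈ H) →
      ∀ x : G, {r ∈ R | f r * g (r⁻¹ * x) ≠ 0}.Finite ∧
        Φ (fun w => ∑ᶠ r ∈ R, f r * g (r⁻¹ * w)) x = ∑ᶠ r ∈ R, Φ f r * Φ g (r⁻¹ * x)) ∧
    (∀ f ∈ Hσ, ∀ x : G,
      Φ (fun w => modularRatio K w⁻¹ * star (f w⁻¹)) x =
        modularRatio H x⁻¹ * star (Φ f x⁻¹)) := by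
  have hKH : K ≤ H := hK ▸ inf_le_left
  have hne : ∀ g : G, σ g ≠ 0 := by
    intro g h
    have := hσu g
    rw [h] at this
    simp at this
  have hinv : ∀ g : G, σ g * σ g⁻¹ = 1 := by
    intro g; rw [← map_mul, mul_inv_cancel, map_one]
  have hconj : ∀ x u : G, σ (x * u * x⁻¹) = σ u := by
    intro x u
    rw [map_mul, map_mul, mul_comm (σ x) (σ u), mul_assoc, hinv, mul_one]
  have hstar : ∀ g : G, star (σ g) * σ g = 1 := by
    intro g
    have h1 : Complex.normSq (σ g) = 1 := by rw [Complex.normSq_eq_norm_sq, hσu g, one_pow]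
    rw [Complex.star_def, mul_comm, Complex.mul_conj, h1, Complex.ofReal_one]
  have hsiginv : ∀ g : G, σ g⁻¹ = star (σ g) := by
    intro g
    apply mul_left_cancel₀ (hne g)
    rw [hinv, mul_comm (σ g), hstar]
  -- Part 1
  have hfin : Finite (H ⧸ K.subgroupOf H) := by
    have : Finite (σ '' (H : Set G)) := hσf.to_subtype
    refine Finite.of_injective (fun q : H ⧸ K.subgroupOf H =>
      (Quotient.liftOn' q (fun h : H => (⟨σ h, ⟨h, h.2, rfl⟩⟩ : σ '' (H : Set G)))
        ?_ : σ '' (H : Set G))) ?_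
    · intro a b hab
      rw [QuotientGroup.leftRel_apply, Subgroup.mem_subgroupOf, hK] at hab
      have h2 : σ ((a : G)⁻¹ * b) = 1 := hab.2
      have h3 : σ (a : G) * σ ((a : G)⁻¹ * (b : G)) = σ (a : G) := by rw [h2, mul_one]
      rw [map_mul, ← mul_assoc, hinv, one_mul] at h3
      exact Subtype.ext h3.symm
    · refine Quotient.ind' fun a => Quotient.ind' fun b => fun h => ?_
      apply Quotient.sound'
      rw [QuotientGroup.leftRel_apply, Subgroup.mem_subgroupOf, hK]
      have hab : σ (a : G) = σ (b : G) := congrArg Subtype.val h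
      constructor
      · exact Subgroup.mul_mem H (inv_mem a.2) b.2
      · show σ ((a : G)⁻¹ * b) = 1
        rw [map_mul, ← hab, mul_comm, hinv]
  have part1 : (K.subgroupOf H).index ≠ 0 := Subgroup.index_ne_zero_of_finite
  -- Part 2
  have hker : ∀ x : G, conjSub K x = conjSub H x ⊓ σ.ker := by
    intro x
    rw [hK]; ext z
    simp only [conjSub, Subgroup.mem_map, Subgroup.mem_inf, MulEquiv.coe_toMonoidHom,
      MulAut.conj_apply, MonoidHom.mem_ker]
    constructor
    · rintro ⟨u, ⟨hu1, hu2⟩, rfl⟩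
      exact ⟨⟨u, hu1, rfl⟩, by rw [hconj, hu2]⟩
    · rintro ⟨⟨u, hu, rfl⟩, hz⟩
      rw [hconj] at hz
      exact ⟨u, ⟨hu, hz⟩, rfl⟩
  have hHf : ∀ x : G, (conjSub H x).relIndex H ≠ 0 := by
    intro x
    have h3 := hHecke x
    rwa [show ((H ⊓ conjSub H x).subgroupOf H).index = (H ⊓ conjSub H x).relIndex H from rfl,
      Subgroup.inf_relIndex_left] at h3
  have hKf : ∀ x : G, (conjSub K x).relIndex K ≠ 0 := by
    intro x
    have h1 : K.relIndex H ≠ 0 := part1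
    have h2 : σ.ker.relIndex H ≠ 0 := by
      rw [← Subgroup.inf_relIndex_right, inf_comm, ← hK]; exact h1
    have h5 : (conjSub K x).relIndex H ≠ 0 := by
      rw [hker x]; exact Subgroup.relIndex_inf_ne_zero (hHf x) h2
    have h6 : (conjSub K x ⊓ K).relIndex H ≠ 0 := Subgroup.relIndex_inf_ne_zero h5 h1
    have h7 : (conjSub K x ⊓ K).relIndex K * K.relIndex H = (conjSub K x ⊓ K).relIndex H :=
      Subgroup.relIndex_mul_relIndex _ K H inf_le_right hKH
    have h8 : (conjSub K x ⊓ K).relIndex K ≠ 0 := fun hz => h6 (by rw [← h7, hz, zero_mul])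
    rwa [Subgroup.inf_relIndex_right] at h8
  have part2 : ∀ x : G, ((K ⊓ conjSub K x).subgroupOf K).index ≠ 0 := by
    intro x
    show (K ⊓ conjSub K x).relIndex K ≠ 0
    rw [Subgroup.inf_relIndex_left]
    exact hKf x
  -- Part 3 : bijectivity
  have part3 : Set.BijOn Φ Hσ Hone := by
    refine ⟨?_, ?_, ?_⟩
    · -- maps to
      intro f hf
      rw [hHσ] at hf
      obtain ⟨hcov, F, hF⟩ := hf
      rw [hHone]
      constructor
      · intro h k x
        rw [hΦ, hΦ, hcov h k x, map_mul, map_mul, star_mul', star_mul']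
        have e1 := hstar (h : G)
        have e2 := hstar (k : G)
        calc star (σ (h : G)) * star (σ x) * star (σ (k : G)) * (σ (h : G) * f x * σ (k : G))
            = (star (σ (h : G)) * σ (h : G)) * ((star (σ (k : G)) * σ (k : G)) *
              (star (σ x) * f x)) := by ring
          _ = star (σ x) * f x := by rw [e1, e2, one_mul, one_mul]
      · refine ⟨F, fun y hy => hF y ?_⟩
        rw [hΦ] at hy
        exact right_ne_zero_of_mul hy
    · -- injective on Hσ
      intro f _ f' _ hff'
      funext x
      have h := congrFun hff' x
      rw [hΦ, hΦ] at h
      exact mul_left_cancel₀ (star_ne_zero.mpr (hne x)) h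
    · -- surjective onto Hone
      intro g hg
      rw [hHone] at hg
      obtain ⟨hcov, F, hF⟩ := hg
      refine ⟨fun x => σ x * g x, ?_, ?_⟩
      · rw [hHσ]
        constructor
        · intro h k x
          show σ ((h : G) * x * (k : G)) * g ((h : G) * x * (k : G))
              = σ (h : G) * (σ x * g x) * σ (k : G)
          rw [hcov h k x, map_mul, map_mul]
          ring
        · refine ⟨F, fun y hy => hF y ?_⟩
          exact right_ne_zero_of_mul hy
      · funext x
        rw [hΦ]
        show star (σ x) * (σ x * g x) = g x
        rw [← mul_assoc, hstar, one_mul]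
  refine ⟨part1, part2, part3, ?_, ?_⟩
  -- Part 4 : convolution
  · intro f hf g hg R hR x
    rw [hHσ] at hf hg
    obtain ⟨hfcov, Ff, hFf⟩ := hf
    -- finitely many transversal elements in a given double coset
    have hfinS : ∀ x₀ : G, {r ∈ R | ∃ h k : H, r = (h : G) * x₀ * (k : G)}.Finite := by
      intro x₀
      have hfinQ : Finite (H ⧸ (H ⊓ conjSub H x₀).subgroupOf H) :=
        Nat.finite_of_card_ne_zero (hHecke x₀)
      set S := {r ∈ R | ∃ h k : H, r = (h : G) * x₀ * (k : G)} with hS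
      have hex : ∀ r : S, ∃ h k : H, (r : G) = (h : G) * x₀ * (k : G) := fun r => r.2.2
      choose hh kk hhk using hex
      rw [← Set.finite_coe_iff]
      refine Finite.of_injective
        (fun r : S => (QuotientGroup.mk (hh r) : H ⧸ (H ⊓ conjSub H x₀).subgroupOf H)) ?_
      intro r r' hrr'
      rw [QuotientGroup.eq, Subgroup.mem_subgroupOf] at hrr'
      obtain ⟨-, u, hu, huv⟩ := hrr'
      -- huv : x₀ * u * x₀⁻¹ = (hh r)⁻¹ * hh r'  (as elements of G)
      have huv' : x₀ * u * x₀⁻¹ = (hh r : G)⁻¹ * (hh r' : G) := by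
        simpa [MulAut.conj_apply] using huv
      have hh' : (hh r : G) * (x₀ * u * x₀⁻¹) = (hh r' : G) := by
        rw [huv']; group
      have e : (r : G)⁻¹ * (r' : G) = (kk r : G)⁻¹ * (u * (kk r' : G)) := by
        rw [hhk r, hhk r', ← hh']
        group
      have hmem : (r : G)⁻¹ * (r' : G) ∈ H := by
        rw [e]
        exact Subgroup.mul_mem H (inv_mem (kk r).2) (Subgroup.mul_mem H hu (kk r').2)
      obtain ⟨t, -, hun⟩ := hR (r' : G)
      have h1 : (r : G) = t := hun (r : G) ⟨r.2.1, hmem⟩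
      have h2 : (r' : G) = t := hun (r' : G) ⟨r'.2.1, by simpa using H.one_mem⟩
      exact Subtype.ext (h1.trans h2.symm)
    have hfin1 : {r ∈ R | f r * g (r⁻¹ * x) ≠ 0}.Finite := by
      refine Set.Finite.subset (Set.Finite.biUnion Ff.finite_toSet
        (fun x₀ _ => hfinS x₀)) ?_
      rintro r ⟨hrR, hrne⟩
      have hfr : f r ≠ 0 := left_ne_zero_of_mul hrne
      obtain ⟨x₀, hx₀, h, k, hr⟩ := hFf r hfr
      exact Set.mem_biUnion hx₀ ⟨hrR, h, k, hr⟩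
    refine ⟨hfin1, ?_⟩
    -- the convolution identity
    have hterm : ∀ r : G, Φ f r * Φ g (r⁻¹ * x) = star (σ x) * (f r * g (r⁻¹ * x)) := by
      intro r
      rw [hΦ, hΦ]
      have hst : star (σ r) * star (σ (r⁻¹ * x)) = star (σ x) := by
        rw [← star_mul', ← map_mul]
        congr 2
        group
      calc star (σ r) * f r * (star (σ (r⁻¹ * x)) * g (r⁻¹ * x))
          = (star (σ r) * star (σ (r⁻¹ * x))) * (f r * g (r⁻¹ * x)) := by ring
        _ = star (σ x) * (f r * g (r⁻¹ * x)) := by rw [hst]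
    rw [finsum_mem_congr rfl (fun r _ => hterm r), hΦ]
    have hsupp : (Function.support (Set.indicator R (fun r => f r * g (r⁻¹ * x)))).Finite := by
      rw [Set.support_indicator]
      exact hfin1.subset (fun r hr => ⟨hr.1, hr.2⟩)
    rw [finsum_mem_def, finsum_mem_def, mul_finsum _ _]
    apply finsum_congr
    intro r
    exact (Set.indicator_const_mul R (fun r => f r * g (r⁻¹ * x)) (star (σ x)) r).symm
  -- Part 5 : involution
  · have deltaKH : ∀ y : G, modularRatio K y = modularRatio H y :=
      delta_eq H K hKH part1 hHf hKf
    intro f _ x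
    rw [hΦ, hΦ, star_mul', star_star, deltaKH x⁻¹, hsiginv x]
    ring
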